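/- Let a, b ∈ F be orthonormal vectors and let A : F → F be a linear isometry (A ∈ O(4)). Then the Killing fields coincide, X_{Aa∧Ab} = X_{a∧b} (i.e. for all p ∈ F, ⟨Ab, p⟩ • Aa − ⟨Aa, p⟩ • Ab = ⟨b, p⟩ • a − ⟨a, p⟩ • b), if and only if there exists θ ∈ ℝ such that Aa = cos θ • a + sin θ • b and Ab = −sin θ • a + cos θ • b, i.e. A preserves the plane spanned by {a, b} and restricts to it as a rotation. (This is the invariance criterion established in the proof of Theorem 4.1 of the paper.) -/

import Mathlib

open Real RealInnerProductSpace

noncomputable section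

/-- The flat Euclidean four-space, whose unit sphere is `S³`. -/
abbrev F4 : Type := EuclideanSpace ℝ (Fin 4)

/-- The standard orthonormal basis of `F4`. -/
def sb4 (i : Fin 4) : F4 := EuclideanSpace.single i (1 : ℝ)

/-- The vector field `X_{a∧b}(p) = ⟨b, p⟩ • a - ⟨a, p⟩ • b`; restricted to the unit
sphere `S³ ⊂ F4` these are exactly the Killing vector fields of `S³`. -/
def KF (a b : F4) : F4 → F4 := fun p => ⟪b, p⟫ • a - ⟪a, p⟫ • b

/-- Invariance criterion (proof of Theorem 4.1): for orthonormal `a, b` and a linear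
isometry `A ∈ O(4)`, the Killing field `X_{Aa∧Ab}` coincides with `X_{a∧b}` iff `A`
preserves the plane spanned by `{a, b}` and restricts to it as a rotation. -/
theorem killing_invariant_iff_rotation (a b : F4) (ha : ‖a‖ = 1) (hb : ‖b‖ = 1)
    (hab : ⟪a, b⟫ = 0) (A : F4 →ₗᵢ[ℝ] F4) :
    (∀ p : F4, KF (A a) (A b) p = KF a b p) ↔
      ∃ θ : ℝ, A a = cos θ • a + sin θ • b ∧ A b = (-sin θ) • a + cos θ • b := by
  have haa : ⟪a, a⟫ = 1 := by rw [real_inner_self_eq_norm_sq, ha]; norm_num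
  have hbb : ⟪b, b⟫ = 1 := by rw [real_inner_self_eq_norm_sq, hb]; norm_num
  have hba : ⟪b, a⟫ = 0 := by rw [real_inner_comm]; exact hab
  have hA : ∀ x y : F4, ⟪A x, A y⟫ = ⟪x, y⟫ := fun x y => A.inner_map_map x y
  constructor
  · intro h
    set u : ℝ := ⟪a, A a⟫ with hu
    set v : ℝ := ⟪b, A a⟫ with hv
    have h1 := h (A a)
    have h2 := h (A b)
    simp only [KF, hA, haa, hbb, hba, hab] at h1 h2
    have hAb : A b = u • b - v • a := by
      have : (0:ℝ) • A a - (1:ℝ) • A b = v • a - u • b := h1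
      simp only [zero_smul, one_smul, zero_sub] at this
      rw [← neg_eq_iff_eq_neg.mpr this.symm] at *
      module
    have hAa : A a = u • a + v • b := by
      have h2' : (1:ℝ) • A a - (0:ℝ) • A b = ⟪b, A b⟫ • a - ⟪a, A b⟫ • b := h2
      have hbAb : ⟪b, A b⟫ = u := by
        rw [hAb, inner_sub_right, real_inner_smul_right, real_inner_smul_right, hbb, hba]
        ring
      have haAb : ⟪a, A b⟫ = -v := by
        rw [hAb, inner_sub_right, real_inner_smul_right, real_inner_smul_right, haa, hab]
        ring
      rw [hbAb, haAb] at h2'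
      simpa [sub_neg_eq_add, sub_eq_add_neg] using h2'
    have hsq : u ^ 2 + v ^ 2 = 1 := by
      have := hA a a
      rw [haa] at this
      nth_rewrite 1 [hAa] at this
      nth_rewrite 1 [hAa] at this
      rw [inner_add_left, inner_add_right, inner_add_right, real_inner_smul_left,
        real_inner_smul_left, real_inner_smul_left, real_inner_smul_left,
        real_inner_smul_right, real_inner_smul_right, real_inner_smul_right,
        real_inner_smul_right, haa, hbb, hab, hba] at this
      nlinarith [this]
    have hz : (⟨u, v⟩ : ℂ) ≠ 0 := by
      intro hzero
      have hu0 : u = 0 := congrArg Complex.re hzero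
      have hv0 : v = 0 := congrArg Complex.im hzero
      rw [hu0, hv0] at hsq; norm_num at hsq
    have habs : ‖(⟨u, v⟩ : ℂ)‖ = 1 := by
      rw [Complex.norm_def, Complex.normSq_mk]
      rw [show u * u + v * v = 1 by nlinarith [hsq]]
      exact Real.sqrt_one
    refine ⟨Complex.arg ⟨u, v⟩, ?_, ?_⟩
    · rw [Complex.cos_arg hz, Complex.sin_arg, habs]
      simpa using hAa
    · rw [Complex.cos_arg hz, Complex.sin_arg, habs]
      rw [hAb]; simp; module
  · rintro ⟨θ, h1, h2⟩ p
    simp only [KF, h1, h2, inner_add_left, real_inner_smul_left, inner_neg_left]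
    have hcs := sin_sq_add_cos_sq θ
    match_scalars
    · linear_combination ⟪b, p⟫ * hcs
    · linear_combination -⟪a, p⟫ * hcs
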